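/- (Donald's formula.) Let ϖ be a positive definite density matrix on ℂ^m ⊗ ℂ^n with reduced density matrices ϖ_A and ϖ_B, and let σ_L be a positive definite density matrix on ℂ^m and σ_R a positive definite density matrix on ℂ^n. Then S(ϖ | σ_L ⊗ σ_R) = I_ϖ(A:B) + S(ϖ_A | σ_L) + S(ϖ_B | σ_R). -/

import Mathlib

open scoped Kronecker ComplexOrder
open Matrix

noncomputable section

namespace TAL

/-- A density matrix: positive semidefinite with trace `1`. -/
def IsDensityMatrix {k : Type*} [Fintype k] [DecidableEq k] (D : Matrix k k ℂ) : Prop :=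
  D.PosSemidef ∧ D.trace = 1

/-- Functional calculus for Hermitian matrices via the spectral decomposition
(junk value `0` on non-Hermitian matrices). -/
def hermCalc {k : Type*} [Fintype k] [DecidableEq k] (f : ℝ → ℝ) (A : Matrix k k ℂ) :
    Matrix k k ℂ :=
  if hA : A.IsHermitian then
    (hA.eigenvectorUnitary : Matrix k k ℂ) *
      Matrix.diagonal (fun i => (f (hA.eigenvalues i) : ℂ)) *
        star (hA.eigenvectorUnitary : Matrix k k ℂ)
  else 0

/-- Matrix logarithm via the spectral decomposition. -/
def matLog {k : Type*} [Fintype k] [DecidableEq k] (A : Matrix k k ℂ) : Matrix k k ℂ :=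
  hermCalc Real.log A

/-- The von Neumann entropy `S(D) = -Tr (D log D)`, computed through the eigenvalues,
with the convention `0 * log 0 = 0` (junk value `0` on non-Hermitian matrices). -/
def vnEntropy {k : Type*} [Fintype k] [DecidableEq k] (A : Matrix k k ℂ) : ℝ :=
  if hA : A.IsHermitian then ∑ i, Real.negMulLog (hA.eigenvalues i) else 0

/-- The Umegaki relative entropy `S(D | E) = Tr (D (log D - log E))`. -/
def relEntropy {k : Type*} [Fintype k] [DecidableEq k] (D E : Matrix k k ℂ) : ℝ :=
  ((D * (matLog D - matLog E)).trace).re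

/-- Partial trace over the second (right) tensor factor. -/
def ptraceR {k₁ k₂ : Type*} [Fintype k₂] (D : Matrix (k₁ × k₂) (k₁ × k₂) ℂ) :
    Matrix k₁ k₁ ℂ :=
  Matrix.of fun i j => ∑ s : k₂, D (i, s) (j, s)

/-- Partial trace over the first (left) tensor factor. -/
def ptraceL {k₁ k₂ : Type*} [Fintype k₁] (D : Matrix (k₁ × k₂) (k₁ × k₂) ℂ) :
    Matrix k₂ k₂ ℂ :=
  Matrix.of fun i j => ∑ s : k₁, D (s, i) (s, j)

/-- The mutual entropy `I_D(A:B) = S(D_A) + S(D_B) - S(D)`. -/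
def mutualEntropy {k₁ k₂ : Type*} [Fintype k₁] [Fintype k₂] [DecidableEq k₁] [DecidableEq k₂]
    (D : Matrix (k₁ × k₂) (k₁ × k₂) ℂ) : ℝ :=
  vnEntropy (ptraceR D) + vnEntropy (ptraceL D) - vnEntropy D

/-- The Gibbs density matrix `e^{-β H} / Tr(e^{-β H})`. -/
def gibbs {k : Type*} [Fintype k] [DecidableEq k] (β : ℝ) (H : Matrix k k ℂ) :
    Matrix k k ℂ :=
  (NormedSpace.exp ((-(β : ℂ)) • H)).trace⁻¹ • NormedSpace.exp ((-(β : ℂ)) • H)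

/-- The free energy functional `F(D) = Tr(H D) - β⁻¹ S(D)` (real part of the trace). -/
def freeEnergy {k : Type*} [Fintype k] [DecidableEq k] (β : ℝ) (H D : Matrix k k ℂ) : ℝ :=
  ((H * D).trace).re - β⁻¹ * vnEntropy D

/-- The ℓ²-operator norm of a matrix. -/
def opNorm {k : Type*} [Fintype k] [DecidableEq k] (A : Matrix k k ℂ) : ℝ :=
  ‖(Matrix.toEuclideanCLM (𝕜 := ℂ) A : EuclideanSpace ℂ k →L[ℂ] EuclideanSpace ℂ k)‖

/-- The trace norm `‖X‖₁ = Tr ((X* X)^{1/2})`. -/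
def traceNorm {k : Type*} [Fintype k] [DecidableEq k] (X : Matrix k k ℂ) : ℝ :=
  ((((Matrix.posSemidef_conjTranspose_mul_self X).1.eigenvectorUnitary : Matrix k k ℂ) *
    Matrix.diagonal (fun i => ((Real.sqrt ((Matrix.posSemidef_conjTranspose_mul_self X).1.eigenvalues i) : ℝ) : ℂ)) *
      (star (Matrix.posSemidef_conjTranspose_mul_self X).1.eigenvectorUnitary : Matrix k k ℂ)).trace).re


/-- The perturbed density matrix `D^h = e^{log D + h} / Tr(e^{log D + h})`. -/
def pert {k : Type*} [Fintype k] [DecidableEq k] (D h : Matrix k k ℂ) : Matrix k k ℂ :=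
  (NormedSpace.exp (matLog D + h)).trace⁻¹ • NormedSpace.exp (matLog D + h)

variable {k : Type*} [Fintype k] [DecidableEq k]

lemma diag_comm_key (f : ℝ → ℝ) (lam d : k → ℝ) (W : Matrix k k ℂ)
    (h : Matrix.diagonal (fun i => (lam i : ℂ)) * W = W * Matrix.diagonal (fun i => (d i : ℂ))) :
    Matrix.diagonal (fun i => (f (lam i) : ℂ)) * W
      = W * Matrix.diagonal (fun i => (f (d i) : ℂ)) := by
  ext i j
  have hij : (lam i : ℂ) * W i j = W i j * (d j : ℂ) := by
    have h2 := congrFun (congrFun h i) j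
    simpa [Matrix.diagonal_mul, Matrix.mul_diagonal] using h2
  simp only [Matrix.diagonal_mul, Matrix.mul_diagonal]
  rcases eq_or_ne (W i j) 0 with h0 | h0
  · simp [h0]
  · have hld : (lam i : ℂ) = (d j : ℂ) := by
      rw [mul_comm (W i j) _] at hij
      exact mul_right_cancel₀ h0 hij
    have : lam i = d j := by exact_mod_cast hld
    rw [this, mul_comm]

lemma hermCalc_conj (f : ℝ → ℝ) (U : Matrix k k ℂ) (hU : U ∈ Matrix.unitaryGroup k ℂ)
    (d : k → ℝ) :
    hermCalc f (U * Matrix.diagonal (fun i => (d i : ℂ)) * star U) =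
      U * Matrix.diagonal (fun i => (f (d i) : ℂ)) * star U := by
  have hUU : U * star U = 1 := Matrix.mem_unitaryGroup_iff.mp hU
  have hUU' : star U * U = 1 := Matrix.mem_unitaryGroup_iff'.mp hU
  have hA : (U * Matrix.diagonal (fun i => (d i : ℂ)) * star U).IsHermitian := by
    apply Matrix.isHermitian_mul_mul_conjTranspose
    exact Matrix.isHermitian_diagonal_iff.mpr fun i => Complex.conj_ofReal (d i)
  rw [hermCalc, dif_pos hA]
  set V := (hA.eigenvectorUnitary : Matrix k k ℂ) with hV
  have hVV : V * star V = 1 := Matrix.mem_unitaryGroup_iff.mp hA.eigenvectorUnitary.2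
  have hVV' : star V * V = 1 := Matrix.mem_unitaryGroup_iff'.mp hA.eigenvectorUnitary.2
  have hspec : V * Matrix.diagonal (fun i => ((hA.eigenvalues i : ℝ) : ℂ)) * star V
      = U * Matrix.diagonal (fun i => (d i : ℂ)) * star U := hA.spectral_theorem.symm
  set W := star V * U with hW
  have hcomm : Matrix.diagonal (fun i => ((hA.eigenvalues i : ℝ) : ℂ)) * W
      = W * Matrix.diagonal (fun i => (d i : ℂ)) := by
    have h1 : star V * (V * Matrix.diagonal (fun i => ((hA.eigenvalues i : ℝ) : ℂ)) * star V) * U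
        = star V * (U * Matrix.diagonal (fun i => (d i : ℂ)) * star U) * U := by rw [hspec]
    calc Matrix.diagonal (fun i => ((hA.eigenvalues i : ℝ) : ℂ)) * W
        = (star V * V) * Matrix.diagonal (fun i => ((hA.eigenvalues i : ℝ) : ℂ)) * (star V * U) := by
          rw [hVV', one_mul, hW]
      _ = star V * (V * Matrix.diagonal (fun i => ((hA.eigenvalues i : ℝ) : ℂ)) * star V) * U := by
          simp only [mul_assoc]
      _ = star V * (U * Matrix.diagonal (fun i => (d i : ℂ)) * star U) * U := h1
      _ = (star V * U) * Matrix.diagonal (fun i => (d i : ℂ)) * (star U * U) := by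
          simp only [mul_assoc]
      _ = W * Matrix.diagonal (fun i => (d i : ℂ)) := by rw [hUU', mul_one, hW]
  have hkey := diag_comm_key f _ _ W hcomm
  have hVWU : V * W = U := by rw [hW, ← mul_assoc, hVV, one_mul]
  have hWW : W * star W = 1 := by
    have h3 : star W = star U * V := by rw [hW, StarMul.star_mul, star_star]
    rw [hW, h3, mul_assoc, ← mul_assoc U, hUU, one_mul, hVV']
  have hstarU : star W * star V = star U := by rw [← StarMul.star_mul, hVWU]
  calc V * Matrix.diagonal (fun i => (f (hA.eigenvalues i) : ℂ)) * star V
      = V * (Matrix.diagonal (fun i => (f (hA.eigenvalues i) : ℂ)) * W * star W) * star V := by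
        rw [mul_assoc (Matrix.diagonal _) W (star W), hWW, mul_one]
    _ = V * (W * Matrix.diagonal (fun i => (f (d i) : ℂ)) * star W) * star V := by rw [hkey]
    _ = U * Matrix.diagonal (fun i => (f (d i) : ℂ)) * star U := by
        rw [← hstarU, ← hVWU]; simp only [mul_assoc]

variable {k : Type*} [Fintype k] [DecidableEq k]

-- trace of D * matLog D through eigenvalues
lemma trace_mul_matLog_self (D : Matrix k k ℂ) (hD : D.IsHermitian) :
    ((D * matLog D).trace).re
      = ∑ i, hD.eigenvalues i * Real.log (hD.eigenvalues i) := by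
  set lam := hD.eigenvalues with hlam
  set V := (hD.eigenvectorUnitary : Matrix k k ℂ) with hV
  have hVV' : star V * V = 1 := Matrix.mem_unitaryGroup_iff'.mp hD.eigenvectorUnitary.2
  have hlog : matLog D = V * Matrix.diagonal (fun i => (Real.log (lam i) : ℂ)) * star V := by
    rw [matLog, hermCalc, dif_pos hD]
  have hspec : D = V * Matrix.diagonal (fun i => ((lam i : ℝ) : ℂ)) * star V :=
    hD.spectral_theorem
  have hmul : D * matLog D
      = V * Matrix.diagonal (fun i => ((lam i : ℂ) * (Real.log (lam i) : ℂ))) * star V := by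
    rw [hlog]
    conv_lhs => rw [hspec]
    calc (V * Matrix.diagonal (fun i => ((lam i : ℝ) : ℂ)) * star V) *
          (V * Matrix.diagonal (fun i => (Real.log (lam i) : ℂ)) * star V)
        = V * (Matrix.diagonal (fun i => ((lam i : ℝ) : ℂ)) * ((star V * V) *
            (Matrix.diagonal (fun i => (Real.log (lam i) : ℂ)) * star V))) := by
          simp only [mul_assoc]
      _ = V * (Matrix.diagonal (fun i => ((lam i : ℝ) : ℂ)) *
            Matrix.diagonal (fun i => (Real.log (lam i) : ℂ))) * star V := by
          rw [hVV', one_mul]; simp only [mul_assoc]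
      _ = _ := by rw [Matrix.diagonal_mul_diagonal]
  rw [hmul, Matrix.trace_mul_cycle, hVV', one_mul, Matrix.trace_diagonal]
  push_cast
  simp

lemma vnEntropy_eq (D : Matrix k k ℂ) (hD : D.IsHermitian) :
    vnEntropy D = - ((D * matLog D).trace).re := by
  rw [vnEntropy, dif_pos hD, trace_mul_matLog_self D hD, ← Finset.sum_neg_distrib]
  exact Finset.sum_congr rfl fun i _ => by simp [Real.negMulLog]

lemma relEntropy_eq (D E : Matrix k k ℂ) :
    relEntropy D E = ((D * matLog D).trace).re - ((D * matLog E).trace).re := by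
  rw [relEntropy, mul_sub, Matrix.trace_sub, Complex.sub_re]

-- Hermitian of partial traces
lemma ptraceR_isHermitian {k₁ k₂ : Type*} [Fintype k₁] [Fintype k₂]
    (D : Matrix (k₁ × k₂) (k₁ × k₂) ℂ) (hD : D.IsHermitian) : (ptraceR D).IsHermitian := by
  ext i j
  simp only [Matrix.conjTranspose_apply, ptraceR, Matrix.of_apply, star_sum]
  exact Finset.sum_congr rfl fun s _ => hD.apply (i, s) (j, s)

lemma ptraceL_isHermitian {k₁ k₂ : Type*} [Fintype k₁] [Fintype k₂]
    (D : Matrix (k₁ × k₂) (k₁ × k₂) ℂ) (hD : D.IsHermitian) : (ptraceL D).IsHermitian := by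
  ext i j
  simp only [Matrix.conjTranspose_apply, ptraceL, Matrix.of_apply, star_sum]
  exact Finset.sum_congr rfl fun s _ => hD.apply (s, i) (s, j)

-- trace identities
lemma trace_mul_kron_one {k₁ k₂ : Type*} [Fintype k₁] [Fintype k₂] [DecidableEq k₁] [DecidableEq k₂]
    (D : Matrix (k₁ × k₂) (k₁ × k₂) ℂ) (X : Matrix k₁ k₁ ℂ) :
    (D * (X ⊗ₖ (1 : Matrix k₂ k₂ ℂ))).trace = (ptraceR D * X).trace := by
  simp only [Matrix.trace, Matrix.diag_apply, Matrix.mul_apply, ptraceR, Matrix.of_apply,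
    Matrix.kroneckerMap_apply, Matrix.one_apply, mul_ite, mul_one, mul_zero,
    Fintype.sum_prod_type, Finset.sum_mul, Finset.sum_ite_eq', Finset.mem_univ, if_true]
  exact Finset.sum_congr rfl fun i _ => Finset.sum_comm

lemma trace_one_kron_mul {k₁ k₂ : Type*} [Fintype k₁] [Fintype k₂] [DecidableEq k₁] [DecidableEq k₂]
    (D : Matrix (k₁ × k₂) (k₁ × k₂) ℂ) (Y : Matrix k₂ k₂ ℂ) :
    (D * ((1 : Matrix k₁ k₁ ℂ) ⊗ₖ Y)).trace = (ptraceL D * Y).trace := by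
  simp only [Matrix.trace, Matrix.diag_apply, Matrix.mul_apply, ptraceL, Matrix.of_apply,
    Matrix.kroneckerMap_apply, Matrix.one_apply, mul_ite, ite_mul, mul_one, mul_zero,
    one_mul, zero_mul, Fintype.sum_prod_type, Finset.sum_mul, Finset.sum_ite_eq',
    Finset.mem_univ, if_true]
  have hswap : ∀ (x : k₁) (x1 : k₂),
      (∑ x2 : k₁, ∑ x3 : k₂, if x2 = x then D (x, x1) (x2, x3) * Y x3 x1 else 0)
        = ∑ x3 : k₂, D (x, x1) (x, x3) * Y x3 x1 := by
    intro x x1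
    rw [Finset.sum_comm]
    exact Finset.sum_congr rfl fun x3 _ => by
      simp [Finset.sum_ite_eq', Finset.mem_univ]
  simp only [hswap]
  rw [Finset.sum_comm]
  exact Finset.sum_congr rfl fun x1 _ => Finset.sum_comm

lemma star_kron {k₁ k₂ : Type*} (A : Matrix k₁ k₁ ℂ) (B : Matrix k₂ k₂ ℂ) :
    star (A ⊗ₖ B) = star A ⊗ₖ star B := by
  ext ⟨i, j⟩ ⟨i', j'⟩
  simp [Matrix.star_apply, Matrix.kroneckerMap_apply, mul_comm]

lemma matLog_kron {k₁ k₂ : Type*} [Fintype k₁] [Fintype k₂] [DecidableEq k₁] [DecidableEq k₂]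
    (P : Matrix k₁ k₁ ℂ) (hP : P.PosDef) (Q : Matrix k₂ k₂ ℂ) (hQ : Q.PosDef) :
    matLog (P ⊗ₖ Q) = matLog P ⊗ₖ (1 : Matrix k₂ k₂ ℂ) + (1 : Matrix k₁ k₁ ℂ) ⊗ₖ matLog Q := by
  have hPh : P.IsHermitian := hP.isHermitian
  have hQh : Q.IsHermitian := hQ.isHermitian
  set a := hPh.eigenvalues with ha
  set b := hQh.eigenvalues with hb
  set U := (hPh.eigenvectorUnitary : Matrix k₁ k₁ ℂ) with hUdef
  set V := (hQh.eigenvectorUnitary : Matrix k₂ k₂ ℂ) with hVdef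
  have hU : U * star U = 1 := Matrix.mem_unitaryGroup_iff.mp hPh.eigenvectorUnitary.2
  have hV : V * star V = 1 := Matrix.mem_unitaryGroup_iff.mp hQh.eigenvectorUnitary.2
  have hUV : (U ⊗ₖ V) ∈ Matrix.unitaryGroup (k₁ × k₂) ℂ := by
    rw [Matrix.mem_unitaryGroup_iff, star_kron, ← Matrix.mul_kronecker_mul, hU, hV,
      Matrix.one_kronecker_one]
  have hPQ : P ⊗ₖ Q = (U ⊗ₖ V) *
      Matrix.diagonal (fun p : k₁ × k₂ => ((a p.1 * b p.2 : ℝ) : ℂ)) * star (U ⊗ₖ V) := by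
    conv_lhs => rw [show P = U * Matrix.diagonal (fun i => ((a i : ℝ) : ℂ)) * star U from
      hPh.spectral_theorem, show Q = V * Matrix.diagonal (fun j => ((b j : ℝ) : ℂ)) * star V from
      hQh.spectral_theorem]
    rw [star_kron, Matrix.mul_kronecker_mul, Matrix.mul_kronecker_mul,
      Matrix.diagonal_kronecker_diagonal]
    congr 1
    congr 1
    funext p
    simp
  have hlogP : matLog P = U * Matrix.diagonal (fun i => (Real.log (a i) : ℂ)) * star U := by
    rw [matLog, hermCalc, dif_pos hPh]
  have hlogQ : matLog Q = V * Matrix.diagonal (fun j => (Real.log (b j) : ℂ)) * star V := by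
    rw [matLog, hermCalc, dif_pos hQh]
  have hdiag : (Matrix.diagonal fun p : k₁ × k₂ => ((Real.log (a p.1 * b p.2) : ℝ) : ℂ))
      = (Matrix.diagonal fun i => (Real.log (a i) : ℂ)) ⊗ₖ (1 : Matrix k₂ k₂ ℂ)
        + (1 : Matrix k₁ k₁ ℂ) ⊗ₖ (Matrix.diagonal fun j => (Real.log (b j) : ℂ)) := by
    rw [← (Matrix.diagonal_one (n := k₂) (α := ℂ)), ← (Matrix.diagonal_one (n := k₁) (α := ℂ)),
      Matrix.diagonal_kronecker_diagonal, Matrix.diagonal_kronecker_diagonal,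
      Matrix.diagonal_add]
    refine congrArg Matrix.diagonal (funext fun p => ?_)
    have hl : Real.log (a p.1 * b p.2) = Real.log (a p.1) + Real.log (b p.2) :=
      Real.log_mul (ne_of_gt (hP.eigenvalues_pos p.1)) (ne_of_gt (hQ.eigenvalues_pos p.2))
    simp [hl]
  rw [hPQ, matLog, hermCalc_conj Real.log _ hUV, hdiag, mul_add, add_mul, hlogP, hlogQ]
  congr 1
  · rw [star_kron, ← Matrix.mul_kronecker_mul, ← Matrix.mul_kronecker_mul, mul_one, hV]
  · rw [star_kron, ← Matrix.mul_kronecker_mul, ← Matrix.mul_kronecker_mul, mul_one, hU]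

/-- Donald's formula. -/
theorem donald_formula {m n : ℕ}
    (ϖ : Matrix (Fin m × Fin n) (Fin m × Fin n) ℂ)
    (hϖ : ϖ.PosDef) (hϖtr : ϖ.trace = 1)
    (σL : Matrix (Fin m) (Fin m) ℂ) (hσL : σL.PosDef) (hσLtr : σL.trace = 1)
    (σR : Matrix (Fin n) (Fin n) ℂ) (hσR : σR.PosDef) (hσRtr : σR.trace = 1) :
    relEntropy ϖ (σL ⊗ₖ σR) =
      mutualEntropy ϖ + relEntropy (ptraceR ϖ) σL + relEntropy (ptraceL ϖ) σR := by
  have hϖh : ϖ.IsHermitian := hϖ.isHermitian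
  have hAh := ptraceR_isHermitian ϖ hϖh
  have hBh := ptraceL_isHermitian ϖ hϖh
  rw [relEntropy_eq, relEntropy_eq, relEntropy_eq,
    matLog_kron σL hσL σR hσR, mul_add, Matrix.trace_add, Complex.add_re,
    trace_mul_kron_one, trace_one_kron_mul,
    mutualEntropy, vnEntropy_eq _ hAh, vnEntropy_eq _ hBh, vnEntropy_eq _ hϖh]
  ring


end TAL
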